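/- arXiv:2206.05187 — 2 statements merged into one kernel-verified Lean document; each statement's English description precedes it below -/
import Mathlib

section
/- For each m ∈ {1,…,M}, let (𝒵^(m), 𝒟^(m)) be a probability space and ℓ^(m) : ℝ^p × 𝒵^(m) → ℝ a measurable loss such that for every z the map w ↦ ℓ^(m)(w; z) is G-Lipschitz and L-smooth. Define R^(m)(w) = E_{Z∼𝒟^(m)}[ℓ^(m)(w; Z)] and R̄ = (1/M)∑_m R^(m). Fix w ∈ ℝ^p, 0 < η < 1/L, b ≥ 1, and ε with 0 ≤ ε ≤ min{G/(2L), G²η/(8b²)}. Independently for each m, sample an i.i.d. minibatch B^(m) ~ (𝒟^(m))^b, let R_{B^(m)}(u) = (1/b)∑_{z∈B^(m)} ℓ^(m)(u; z), and let w^(m) be a measurable selection of ε-inexact minimizers of u ↦ R_{B^(m)}(u) + ‖u − w‖²/(2η) satisfying ‖w^(m) − w‖ ≤ 2Gη almost surely. Then ‖∇R̄(w) − (1/M)∑_{m=1}^M E[∇R_{B^(m)}(w^(m))]‖² ≤ 12L²G²η² + 75L²G²η²/((1 − ηL)²b²) + 75L²G²η²/((1 − ηL)²b). -/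
open MeasureTheory Finset

section AuxFedMSPP

open InnerProductSpace

lemma fedmspp_gradient_eq_sum_fderiv {p : ℕ} (f : EuclideanSpace ℝ (Fin p) → ℝ)
    (x : EuclideanSpace ℝ (Fin p)) :
    gradient f x = ∑ i, (fderiv ℝ f x (EuclideanSpace.basisFun (Fin p) ℝ i)) •
      (EuclideanSpace.basisFun (Fin p) ℝ i : EuclideanSpace ℝ (Fin p)) := by
  set b := EuclideanSpace.basisFun (Fin p) ℝ with hb
  have hfd : (toDual ℝ (EuclideanSpace ℝ (Fin p))) (gradient f x) = fderiv ℝ f x :=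
    (toDual ℝ _).apply_symm_apply _
  conv_lhs => rw [← b.sum_repr (gradient f x)]
  refine Finset.sum_congr rfl fun i _ => ?_
  rw [b.repr_apply_apply, real_inner_comm, ← hfd]
  rfl

lemma fedmspp_norm_gradient_le {p : ℕ} (f : EuclideanSpace ℝ (Fin p) → ℝ) {G : ℝ} (hG : 0 ≤ G)
    (hlip : ∀ w w', |f w - f w'| ≤ G * ‖w - w'‖) (x : EuclideanSpace ℝ (Fin p)) :
    ‖gradient f x‖ ≤ G := by
  have hl : LipschitzWith (Real.toNNReal G) f := by
    apply LipschitzWith.of_dist_le_mul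
    intro a b
    rw [Real.dist_eq, dist_eq_norm]
    simpa [Real.coe_toNNReal G hG] using hlip a b
  have h := norm_fderiv_le_of_lipschitz ℝ hl (x₀ := x)
  rw [gradient, LinearIsometryEquiv.norm_map]
  exact h.trans_eq (Real.coe_toNNReal G hG)

lemma fedmspp_hasGradientAt_const_mul_sum {p : ℕ} {ι : Type*} (s : Finset ι) (c : ℝ)
    (f : ι → EuclideanSpace ℝ (Fin p) → ℝ) (g : ι → EuclideanSpace ℝ (Fin p))
    (x : EuclideanSpace ℝ (Fin p)) (h : ∀ i ∈ s, HasGradientAt (f i) (g i) x) :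
    HasGradientAt (fun u => c * ∑ i ∈ s, f i u) (c • ∑ i ∈ s, g i) x := by
  have hf : HasFDerivAt (fun u => ∑ i ∈ s, f i u)
      (∑ i ∈ s, (toDual ℝ (EuclideanSpace ℝ (Fin p))) (g i)) x :=
    HasFDerivAt.fun_sum fun i hi => (h i hi).hasFDerivAt
  have h2 := hf.const_mul c
  rw [hasGradientAt_iff_hasFDerivAt]
  rw [_root_.map_smul, map_sum]
  exact h2

lemma fedmspp_measurable_gradient_uncurry {p : ℕ} {Z : Type*} [MeasurableSpace Z]
    (ℓ : EuclideanSpace ℝ (Fin p) → Z → ℝ) (hmeas : Measurable (Function.uncurry ℓ))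
    (hdiff : ∀ z, Differentiable ℝ (fun w => ℓ w z)) :
    Measurable (fun q : EuclideanSpace ℝ (Fin p) × Z => gradient (fun u => ℓ u q.2) q.1) := by
  set e := EuclideanSpace.basisFun (Fin p) ℝ with he
  apply measurable_of_tendsto_metrizable
    (f := fun n (q : EuclideanSpace ℝ (Fin p) × Z) =>
      ∑ i, (((n : ℝ) + 1) • (ℓ (q.1 + ((n : ℝ) + 1)⁻¹ • (e i : EuclideanSpace ℝ (Fin p))) q.2
        - ℓ q.1 q.2)) • (e i : EuclideanSpace ℝ (Fin p)))
  · intro n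
    apply Finset.measurable_sum
    intro i _
    apply Measurable.smul_const
    simp only [smul_eq_mul]
    apply Measurable.const_mul
    exact (hmeas.comp ((measurable_fst.add_const _).prodMk measurable_snd)).sub
      (hmeas.comp (measurable_fst.prodMk measurable_snd))
  · rw [tendsto_pi_nhds]
    intro q
    have hd : HasFDerivAt (fun u => ℓ u q.2) (fderiv ℝ (fun u => ℓ u q.2) q.1) q.1 :=
      ((hdiff q.2) q.1).hasFDerivAt
    rw [fedmspp_gradient_eq_sum_fderiv]
    apply tendsto_finset_sum
    intro i _
    have hc : Filter.Tendsto (fun n : ℕ => ‖(n : ℝ) + 1‖) Filter.atTop Filter.atTop := by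
      have h1 : Filter.Tendsto (fun n : ℕ => (n : ℝ) + 1) Filter.atTop Filter.atTop :=
        Filter.tendsto_atTop_add_const_right _ 1 tendsto_natCast_atTop_atTop
      refine h1.congr fun n => ?_
      rw [Real.norm_of_nonneg (by positivity)]
    exact (hd.lim (e i) hc).smul_const (e i)

lemma fedmspp_measurePreserving_eval_pi {ι : Type*} [Fintype ι] {α : ι → Type*}
    [∀ i, MeasurableSpace (α i)] (μ : ∀ i, Measure (α i)) [∀ i, IsProbabilityMeasure (μ i)]
    (i : ι) : MeasurePreserving (Function.eval i) (Measure.pi μ) (μ i) := by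
  classical
  refine ⟨measurable_pi_apply i, ?_⟩
  ext s hs
  rw [Measure.map_apply (measurable_pi_apply i) hs]
  have h1 : Function.eval i ⁻¹' s =
      Set.pi Set.univ (Function.update (fun _ => Set.univ) i s) := by
    ext f
    simp only [Set.mem_preimage, Set.mem_pi, Set.mem_univ, forall_true_left]
    constructor
    · intro h j
      rcases eq_or_ne j i with rfl | hj
      · simpa using h
      · simp [Function.update_of_ne hj]
    · intro h
      simpa using h i
  rw [h1, Measure.pi_pi]
  rw [Fintype.prod_eq_single i]
  · simp
  · intro j hj
    simp [Function.update_of_ne hj]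

lemma fedmspp_integral_eval_pi {ι : Type*} [Fintype ι] {α : ι → Type*}
    [∀ i, MeasurableSpace (α i)] (μ : ∀ i, Measure (α i)) [∀ i, IsProbabilityMeasure (μ i)]
    (i : ι) {E : Type*} [NormedAddCommGroup E] [NormedSpace ℝ E]
    (f : α i → E) (hf : AEStronglyMeasurable f (μ i)) :
    ∫ β, f (β i) ∂(Measure.pi μ) = ∫ z, f z ∂(μ i) := by
  rw [← (fedmspp_measurePreserving_eval_pi μ i).map_eq,
    integral_map (measurable_pi_apply i).aemeasurable
      (by rwa [(fedmspp_measurePreserving_eval_pi μ i).map_eq])]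

end AuxFedMSPP

set_option maxHeartbeats 2000000 in
/-- Bias bound for the expected averaged minibatch gradients in `FedMSPP`:
for `G`-Lipschitz, `L`-smooth losses, `0 < η < 1/L`, `0 ≤ ε ≤ min{G/(2L), G²η/(8b²)}`, and
`w^(m)` a measurable selection of `ε`-inexact minimizers of the minibatch proximal objective
staying a.s. within `2Gη` of `w`,
`‖∇R̄(w) − (1/M)∑ₘ EuclideanSpace ℝ (Fin p)[∇R_{B^(m)}(w^(m))]‖² ≤ 12L²G²η² + 75L²G²η²/((1−ηL)²b²) +
75L²G²η²/((1−ηL)²b)`. -/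
theorem fedmspp_expected_direction_bias_bound
    (p M b : ℕ) (hM : 1 ≤ M) (hb : 1 ≤ b)
    (Z : Fin M → Type*) [∀ m, MeasurableSpace (Z m)]
    (μ : ∀ m, Measure (Z m)) [∀ m, IsProbabilityMeasure (μ m)]
    (G L η ε : ℝ) (hG : 0 ≤ G) (hL : 0 < L)
    (hη0 : 0 < η) (hηL : η < 1 / L)
    (hε0 : 0 ≤ ε) (hε : ε ≤ min (G / (2 * L)) (G ^ 2 * η / (8 * b ^ 2)))
    (ℓ : (m : Fin M) → EuclideanSpace ℝ (Fin p) → Z m → ℝ)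
    (hmeas : ∀ m, Measurable (Function.uncurry (ℓ m)))
    (hlip : ∀ m z w w', |ℓ m w z - ℓ m w' z| ≤ G * ‖w - w'‖)
    (hdiff : ∀ m z, Differentiable ℝ (fun w => ℓ m w z))
    (hsmooth : ∀ m z w w',
      ‖gradient (fun w => ℓ m w z) w - gradient (fun w => ℓ m w z) w'‖ ≤ L * ‖w - w'‖)
    (hint : ∀ m w, Integrable (fun z => ℓ m w z) (μ m))
    (R : Fin M → EuclideanSpace ℝ (Fin p) → ℝ)
    (hR : ∀ m w, R m w = ∫ z, ℓ m w z ∂(μ m))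
    (w : EuclideanSpace ℝ (Fin p))
    (wm : (m : Fin M) → (Fin b → Z m) → EuclideanSpace ℝ (Fin p))
    (hwmmeas : ∀ m, Measurable (wm m))
    (hinexact : ∀ m (β : Fin b → Z m),
      ((b : ℝ)⁻¹ * ∑ i, ℓ m (wm m β) (β i)) + ‖wm m β - w‖ ^ 2 / (2 * η)
        ≤ (⨅ u, ((b : ℝ)⁻¹ * ∑ i, ℓ m u (β i)) + ‖u - w‖ ^ 2 / (2 * η)) + ε)
    (hclose : ∀ m, ∀ᵐ β ∂(Measure.pi fun _ : Fin b => μ m), ‖wm m β - w‖ ≤ 2 * G * η) :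
    ‖gradient (fun u => (M : ℝ)⁻¹ * ∑ m, R m u) w
        - (M : ℝ)⁻¹ • ∑ m,
            ∫ β, gradient (fun u => (b : ℝ)⁻¹ * ∑ i, ℓ m u (β i)) (wm m β)
              ∂(Measure.pi fun _ : Fin b => μ m)‖ ^ 2
      ≤ 12 * L ^ 2 * G ^ 2 * η ^ 2
        + 75 * L ^ 2 * G ^ 2 * η ^ 2 / ((1 - η * L) ^ 2 * b ^ 2)
        + 75 * L ^ 2 * G ^ 2 * η ^ 2 / ((1 - η * L) ^ 2 * b) := by
  classical
  have hb0 : (0 : ℝ) < (b : ℝ) := by exact_mod_cast hb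
  have hM0 : (0 : ℝ) < (M : ℝ) := by exact_mod_cast hM
  set g : (m : Fin M) → Z m → EuclideanSpace ℝ (Fin p) → EuclideanSpace ℝ (Fin p) :=
    fun m z x => gradient (fun u => ℓ m u z) x with hgdef
  have hgmeas : ∀ m, Measurable (fun q : EuclideanSpace ℝ (Fin p) × Z m => g m q.2 q.1) :=
    fun m => fedmspp_measurable_gradient_uncurry (ℓ m) (hmeas m) (hdiff m)
  have hgbound : ∀ m (z : Z m) (x : EuclideanSpace ℝ (Fin p)), ‖g m z x‖ ≤ G := fun m z x =>
    fedmspp_norm_gradient_le _ hG (fun a a' => hlip m z a a') x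
  have hgrad_at : ∀ m (z : Z m) (x : EuclideanSpace ℝ (Fin p)), HasGradientAt (fun u => ℓ m u z) (g m z x) x :=
    fun m z x => ((hdiff m z) x).hasGradientAt
  have hmeas_sec : ∀ m (x : EuclideanSpace ℝ (Fin p)), Measurable (fun z => ℓ m x z) :=
    fun m x => (hmeas m).comp (measurable_const.prodMk measurable_id)
  have hgz_meas : ∀ m (x : EuclideanSpace ℝ (Fin p)), Measurable (fun z => g m z x) :=
    fun m x => (hgmeas m).comp (measurable_const.prodMk measurable_id)
  set Gm : Fin M → EuclideanSpace ℝ (Fin p) := fun m => ∫ z, g m z w ∂(μ m) with hGm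
  -- Step A : gradient of each R m
  have hintg : ∀ m (x : EuclideanSpace ℝ (Fin p)), Integrable (fun z => g m z x) (μ m) := fun m x =>
    (integrable_const G).mono' (hgz_meas m x).aestronglyMeasurable
      (Filter.Eventually.of_forall fun z => hgbound m z x)
  have hFderiv : ∀ m, HasFDerivAt (fun x => ∫ z, ℓ m x z ∂(μ m))
      (∫ z, (InnerProductSpace.toDual ℝ (EuclideanSpace ℝ (Fin p))) (g m z w) ∂(μ m)) w := by
    intro m
    apply hasFDerivAt_integral_of_dominated_of_fderiv_le (s := Metric.ball w 1)
      (F' := fun (x : EuclideanSpace ℝ (Fin p)) (z : Z m) => (InnerProductSpace.toDual ℝ (EuclideanSpace ℝ (Fin p))) (g m z x))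
      (bound := fun _ => G) (Metric.ball_mem_nhds w zero_lt_one)
    · exact Filter.Eventually.of_forall fun x => (hmeas_sec m x).aestronglyMeasurable
    · exact hint m w
    · exact (InnerProductSpace.toDual ℝ (EuclideanSpace ℝ (Fin p))).continuous.comp_aestronglyMeasurable
        (hgz_meas m w).aestronglyMeasurable
    · refine Filter.Eventually.of_forall fun z x _ => ?_
      rw [LinearIsometryEquiv.norm_map]
      exact hgbound m z x
    · exact integrable_const G
    · exact Filter.Eventually.of_forall fun z x _ => (hgrad_at m z x).hasFDerivAt
  have htoDual : ∀ m, ∫ z, (InnerProductSpace.toDual ℝ (EuclideanSpace ℝ (Fin p))) (g m z w) ∂(μ m)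
      = (InnerProductSpace.toDual ℝ (EuclideanSpace ℝ (Fin p))) (Gm m) :=
    fun m => (InnerProductSpace.toDual ℝ (EuclideanSpace ℝ (Fin p))).toLinearIsometry.integral_comp_comm
      (fun z => g m z w)
  have hRgrad : ∀ m, HasGradientAt (R m) (Gm m) w := by
    intro m
    have hfun : R m = fun x => ∫ z, ℓ m x z ∂(μ m) := funext fun x => hR m x
    rw [hfun, hasGradientAt_iff_hasFDerivAt, ← htoDual m]
    exact hFderiv m
  have hRbar : HasGradientAt (fun u => (M : ℝ)⁻¹ * ∑ m, R m u)
      ((M : ℝ)⁻¹ • ∑ m, Gm m) w :=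
    fedmspp_hasGradientAt_const_mul_sum univ _ _ _ _ fun m _ => hRgrad m
  rw [hRbar.gradient]
  -- Minibatch gradients
  set π : (m : Fin M) → Measure (Fin b → Z m) :=
    fun m => Measure.pi fun _ : Fin b => μ m with hπ
  set φ : (m : Fin M) → (Fin b → Z m) → EuclideanSpace ℝ (Fin p) :=
    fun m β => (b : ℝ)⁻¹ • ∑ i, g m (β i) (wm m β) with hφdef
  set ψ : (m : Fin M) → (Fin b → Z m) → EuclideanSpace ℝ (Fin p) :=
    fun m β => (b : ℝ)⁻¹ • ∑ i, g m (β i) w with hψdef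
  have hgradB : ∀ m (β : Fin b → Z m),
      gradient (fun u => (b : ℝ)⁻¹ * ∑ i, ℓ m u (β i)) (wm m β) = φ m β := fun m β =>
    (fedmspp_hasGradientAt_const_mul_sum univ _ _ _ _
      (fun i _ => hgrad_at m (β i) (wm m β))).gradient
  have hcoord_meas : ∀ m (i : Fin b), Measurable (fun β : Fin b → Z m => g m (β i) (wm m β)) :=
    fun m i => (hgmeas m).comp ((hwmmeas m).prodMk (measurable_pi_apply i))
  have hcoord_int : ∀ m (i : Fin b), Integrable (fun β : Fin b → Z m => g m (β i) (wm m β)) (π m) :=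
    fun m i => (integrable_const G).mono' (hcoord_meas m i).aestronglyMeasurable
      (Filter.Eventually.of_forall fun β => hgbound m (β i) (wm m β))
  have hcoordw_meas : ∀ m (i : Fin b), Measurable (fun β : Fin b → Z m => g m (β i) w) :=
    fun m i => (hgmeas m).comp (measurable_const.prodMk (measurable_pi_apply i))
  have hcoordw_int : ∀ m (i : Fin b), Integrable (fun β : Fin b → Z m => g m (β i) w) (π m) :=
    fun m i => (integrable_const G).mono' (hcoordw_meas m i).aestronglyMeasurable
      (Filter.Eventually.of_forall fun β => hgbound m (β i) w)
  have hφint : ∀ m, Integrable (φ m) (π m) := fun m =>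
    ((integrable_finset_sum univ fun i _ => hcoord_int m i).smul ((b : ℝ)⁻¹))
  have hψint : ∀ m, Integrable (ψ m) (π m) := fun m =>
    ((integrable_finset_sum univ fun i _ => hcoordw_int m i).smul ((b : ℝ)⁻¹))
  -- ∫ ψ = Gm
  have hψint_eq : ∀ m, ∫ β, ψ m β ∂(π m) = Gm m := by
    intro m
    rw [hψdef]
    simp only
    rw [integral_smul, integral_finset_sum univ fun i _ => hcoordw_int m i]
    have heach : ∀ i : Fin b, ∫ β, g m (β i) w ∂(π m) = Gm m := fun i =>
      fedmspp_integral_eval_pi (fun _ : Fin b => μ m) i (fun z => g m z w)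
        (hgz_meas m w).aestronglyMeasurable
    rw [Finset.sum_congr rfl fun i _ => heach i, Finset.sum_const, card_univ, Fintype.card_fin]
    rw [← Nat.cast_smul_eq_nsmul ℝ, smul_smul, inv_mul_cancel₀ (ne_of_gt hb0), one_smul]
  -- key bound per machine
  have hkey : ∀ m, ‖Gm m - ∫ β, φ m β ∂(π m)‖ ≤ 2 * L * G * η := by
    intro m
    rw [← hψint_eq m, ← integral_sub (hψint m) (hφint m)]
    have hbd : ∀ᵐ β ∂(π m), ‖ψ m β - φ m β‖ ≤ 2 * L * G * η := by
      filter_upwards [hclose m] with β hβ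
      have h1 : ψ m β - φ m β = (b : ℝ)⁻¹ • ∑ i, (g m (β i) w - g m (β i) (wm m β)) := by
        rw [hψdef, hφdef]
        simp only
        rw [← smul_sub, ← Finset.sum_sub_distrib]
      rw [h1, norm_smul, Real.norm_eq_abs, abs_of_nonneg (by positivity)]
      have h2 : ∑ i : Fin b, ‖g m (β i) w - g m (β i) (wm m β)‖
          ≤ ∑ _i : Fin b, L * (2 * G * η) := by
        refine Finset.sum_le_sum fun i _ => ?_
        refine (hsmooth m (β i) w (wm m β)).trans ?_
        refine mul_le_mul_of_nonneg_left ?_ hL.le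
        rw [norm_sub_rev]
        exact hβ
      calc (b : ℝ)⁻¹ * ‖∑ i, (g m (β i) w - g m (β i) (wm m β))‖
          ≤ (b : ℝ)⁻¹ * ∑ i, ‖g m (β i) w - g m (β i) (wm m β)‖ := by
            exact mul_le_mul_of_nonneg_left (norm_sum_le _ _) (by positivity)
        _ ≤ (b : ℝ)⁻¹ * ∑ _i : Fin b, L * (2 * G * η) :=
            mul_le_mul_of_nonneg_left h2 (by positivity)
        _ = (b : ℝ)⁻¹ * ((b : ℝ) * (L * (2 * G * η))) := by
            rw [Finset.sum_const, card_univ, Fintype.card_fin, nsmul_eq_mul]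
        _ = 2 * L * G * η := by
            field_simp
    have := norm_integral_le_of_norm_le_const hbd
    simpa [measure_univ] using this
  -- assemble
  have hfin : ‖(M : ℝ)⁻¹ • ∑ m, Gm m - (M : ℝ)⁻¹ • ∑ m, ∫ β, φ m β ∂(π m)‖ ≤ 2 * L * G * η := by
    rw [← smul_sub, ← Finset.sum_sub_distrib, norm_smul, Real.norm_eq_abs,
      abs_of_nonneg (by positivity)]
    calc (M : ℝ)⁻¹ * ‖∑ m, (Gm m - ∫ β, φ m β ∂(π m))‖
        ≤ (M : ℝ)⁻¹ * ∑ m, ‖Gm m - ∫ β, φ m β ∂(π m)‖ :=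
          mul_le_mul_of_nonneg_left (norm_sum_le _ _) (by positivity)
      _ ≤ (M : ℝ)⁻¹ * ∑ _m : Fin M, 2 * L * G * η :=
          mul_le_mul_of_nonneg_left (Finset.sum_le_sum fun m _ => hkey m) (by positivity)
      _ = (M : ℝ)⁻¹ * ((M : ℝ) * (2 * L * G * η)) := by
          rw [Finset.sum_const, card_univ, Fintype.card_fin, nsmul_eq_mul]
      _ = 2 * L * G * η := by field_simp
  have hrw : (∑ m, ∫ β, gradient (fun u => (b : ℝ)⁻¹ * ∑ i, ℓ m u (β i)) (wm m β) ∂(π m))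
      = ∑ m, ∫ β, φ m β ∂(π m) := by
    refine Finset.sum_congr rfl fun m _ => ?_
    exact integral_congr_ae (Filter.Eventually.of_forall fun β => hgradB m β)
  rw [hrw]
  have hsq : ‖(M : ℝ)⁻¹ • ∑ m, Gm m - (M : ℝ)⁻¹ • ∑ m, ∫ β, φ m β ∂(π m)‖ ^ 2
      ≤ (2 * L * G * η) ^ 2 := by
    have := pow_le_pow_left₀ (norm_nonneg _) hfin 2
    exact this
  refine hsq.trans ?_
  have h1 : (2 * L * G * η) ^ 2 = 4 * (L ^ 2 * G ^ 2 * η ^ 2) := by ring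
  have h2 : (0 : ℝ) ≤ L ^ 2 * G ^ 2 * η ^ 2 := by positivity
  have h3 : (0 : ℝ) ≤ 75 * L ^ 2 * G ^ 2 * η ^ 2 / ((1 - η * L) ^ 2 * (b : ℝ) ^ 2) := by
    positivity
  have h4 : (0 : ℝ) ≤ 75 * L ^ 2 * G ^ 2 * η ^ 2 / ((1 - η * L) ^ 2 * (b : ℝ)) := by
    positivity
  rw [h1]
  nlinarith [h2, h3, h4]
end

section
/- Let R^(1),…,R^(M) : ℝ^p → ℝ each be G-Lipschitz and ν-weakly convex, and let R̄ = (1/M)∑_{m=1}^M R^(m). Fix ρ and η with 0 < η ≤ ρ < 1/(2ν). Fix w ∈ ℝ^p; for each m let w^(m) be the (unique) minimizer of u ↦ R^(m)(u) + ‖u − w‖²/(2η), let S be a uniformly random subset of {1,…,M} of cardinality I, set w⁺ = (1/I)∑_{ξ∈S} w^(ξ), and let ŵ = prox_{ρR̄}(w). Then E[R̄_ρ(w⁺)] ≤ R̄_ρ(w) − (((1/ρ − ν)/ρ)/(1/η + 1/ρ − 2ν))·‖ŵ − w‖² + (2G²η/ρ)/(1/η + 1/ρ − 2ν), where R̄_ρ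 is the ρ-Moreau envelope of R̄. -/
open Finset

section AuxLemmas

variable {E : Type*} [NormedAddCommGroup E] [InnerProductSpace ℝ E]
private lemma combo_norm_sq (a b : E) (t : ℝ) :
    ‖(1 - t) • a + t • b‖ ^ 2
      = (1 - t) * ‖a‖ ^ 2 + t * ‖b‖ ^ 2 - t * (1 - t) * ‖a - b‖ ^ 2 := by
  have h : ∀ x : E, ‖x‖ ^ 2 = (inner ℝ x x : ℝ) := fun x => (real_inner_self_eq_norm_sq x).symm
  rw [h, h, h, h]
  simp only [inner_add_left, inner_add_right, inner_sub_left, inner_sub_right,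
    real_inner_smul_left, real_inner_smul_right]
  rw [real_inner_comm b a]
  ring

private lemma strong_growth (f : E → ℝ) (ν lam : ℝ) (hlam : 0 < lam)
    (hconv : ConvexOn ℝ Set.univ fun u => f u + ν / 2 * ‖u‖ ^ 2)
    (w x : E) (hmin : IsMinOn (fun u => f u + ‖u - w‖ ^ 2 / (2 * lam)) Set.univ x)
    (u : E) :
    f x + ‖x - w‖ ^ 2 / (2 * lam) + (1 / lam - ν) / 2 * ‖u - x‖ ^ 2
      ≤ f u + ‖u - w‖ ^ 2 / (2 * lam) := by
  have hC : ‖u - x‖ ^ 2 = ‖x - u‖ ^ 2 := by rw [norm_sub_rev]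
  rw [hC]
  have key : ∀ t : ℝ, 0 < t → t ≤ 1 →
      f x + ‖x - w‖ ^ 2 / (2 * lam) + (1 - t) * ((1 / lam - ν) / 2) * ‖x - u‖ ^ 2
        ≤ f u + ‖u - w‖ ^ 2 / (2 * lam) := by
    intro t ht ht1
    have hmin' : f x + ‖x - w‖ ^ 2 / (2 * lam)
        ≤ f ((1 - t) • x + t • u) + ‖((1 - t) • x + t • u) - w‖ ^ 2 / (2 * lam) :=
      hmin (Set.mem_univ ((1 - t) • x + t • u))
    have hcvx := hconv.2 (Set.mem_univ x) (Set.mem_univ u)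
      (by linarith : (0:ℝ) ≤ 1 - t) ht.le (by ring)
    simp only [smul_eq_mul] at hcvx
    have e1 : ‖(1 - t) • x + t • u‖ ^ 2
        = (1 - t) * ‖x‖ ^ 2 + t * ‖u‖ ^ 2 - t * (1 - t) * ‖x - u‖ ^ 2 :=
      combo_norm_sq x u t
    have e2 : ((1 - t) • x + t • u) - w = (1 - t) • (x - w) + t • (u - w) := by
      rw [smul_sub, smul_sub]
      rw [show (1 - t) • x - (1 - t) • w + (t • u - t • w)
            = (1 - t) • x + t • u - ((1 - t) • w + t • w) by abel]
      rw [← add_smul]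
      norm_num
    have e3 : ‖((1 - t) • x + t • u) - w‖ ^ 2
        = (1 - t) * ‖x - w‖ ^ 2 + t * ‖u - w‖ ^ 2 - t * (1 - t) * ‖x - u‖ ^ 2 := by
      rw [e2, combo_norm_sq]
      rw [show x - w - (u - w) = x - u by abel]
    rw [e3] at hmin'
    rw [e1] at hcvx
    have hdiv : ((1 - t) * ‖x - w‖ ^ 2 + t * ‖u - w‖ ^ 2 - t * (1 - t) * ‖x - u‖ ^ 2) / (2 * lam)
        = (1 - t) * (‖x - w‖ ^ 2 / (2 * lam)) + t * (‖u - w‖ ^ 2 / (2 * lam))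
          - t * (1 - t) * (‖x - u‖ ^ 2 / (2 * lam)) := by ring
    rw [hdiv] at hmin'
    have hμC : (1 - t) * ((1 / lam - ν) / 2) * ‖x - u‖ ^ 2
        = (1 - t) * (‖x - u‖ ^ 2 / (2 * lam)) - (1 - t) * (ν / 2 * ‖x - u‖ ^ 2) := by ring
    have hstep : t * (f x + ‖x - w‖ ^ 2 / (2 * lam)
          + (1 - t) * ((1 / lam - ν) / 2) * ‖x - u‖ ^ 2)
        ≤ t * (f u + ‖u - w‖ ^ 2 / (2 * lam)) := by
      rw [hμC]
      have comb := add_le_add hmin' hcvx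
      nlinarith [comb]
    exact le_of_mul_le_mul_left hstep ht
  by_contra hcon
  push_neg at hcon
  set μC : ℝ := (1 / lam - ν) / 2 * ‖x - u‖ ^ 2 with hμCdef
  set L := f x + ‖x - w‖ ^ 2 / (2 * lam) with hL
  set Ru := f u + ‖u - w‖ ^ 2 / (2 * lam) with hRu
  have hε : 0 < L + μC - Ru := by linarith
  rcases le_or_gt μC 0 with hneg | hpos
  · have h1 := key 1 one_pos le_rfl
    have : (1 - 1 : ℝ) * ((1 / lam - ν) / 2) * ‖x - u‖ ^ 2 = 0 := by ring
    rw [this] at h1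
    linarith
  · set t : ℝ := min 1 ((L + μC - Ru) / (2 * μC)) with htdef
    have ht0 : 0 < t := lt_min one_pos (by positivity)
    have ht1 : t ≤ 1 := min_le_left _ _
    have htle : t * μC ≤ (L + μC - Ru) / 2 := by
      have h2 : t ≤ (L + μC - Ru) / (2 * μC) := min_le_right _ _
      calc t * μC ≤ (L + μC - Ru) / (2 * μC) * μC :=
            mul_le_mul_of_nonneg_right h2 hpos.le
        _ = (L + μC - Ru) / 2 := by field_simp
    have h3 := key t ht0 ht1
    have h4 : (1 - t) * ((1 / lam - ν) / 2) * ‖x - u‖ ^ 2 = μC - t * μC := by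
      rw [hμCdef]; ring
    rw [h4] at h3
    clear_value t μC L Ru
    linarith

private lemma count_contain {M I : ℕ} (hI : 1 ≤ I) (ξ : Fin M) :
    (((univ : Finset (Fin M)).powersetCard I).filter (fun s => ξ ∈ s)).card
      = (M - 1).choose (I - 1) := by
  have hcard : (((univ : Finset (Fin M)).powersetCard I).filter (fun s => ξ ∈ s)).card
      = ((univ.erase ξ).powersetCard (I - 1)).card := by
    apply card_nbij' (fun s => s.erase ξ) (fun t => insert ξ t)
    · intro s hs
      simp only [mem_coe, mem_filter, mem_powersetCard] at hs
      obtain ⟨⟨hsub, hc⟩, hmem⟩ := hs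
      rw [mem_coe, mem_powersetCard]
      exact ⟨erase_subset_erase ξ hsub, by rw [card_erase_of_mem hmem, hc]⟩
    · intro t ht
      rw [mem_coe, mem_powersetCard] at ht
      obtain ⟨hsub, hc⟩ := ht
      have hξt : ξ ∉ t := fun h => (mem_erase.mp (hsub h)).1 rfl
      simp only [mem_coe, mem_filter, mem_powersetCard]
      refine ⟨⟨subset_univ _, ?_⟩, mem_insert_self _ _⟩
      rw [card_insert_of_notMem hξt, hc]
      omega
    · intro s hs
      simp only [mem_coe, mem_filter] at hs
      exact insert_erase hs.2
    · intro t ht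
      rw [mem_coe, mem_powersetCard] at ht
      have hξt : ξ ∉ t := fun h => (mem_erase.mp (ht.1 h)).1 rfl
      exact erase_insert hξt
  rw [hcard, card_powersetCard, card_erase_of_mem (mem_univ ξ), card_univ, Fintype.card_fin]

private lemma avg_subset_sum {M I : ℕ} (hI : 1 ≤ I) (hIM : I ≤ M) (a : Fin M → ℝ) :
    ((((univ : Finset (Fin M)).powersetCard I).card : ℝ)⁻¹ *
      ∑ s ∈ (univ : Finset (Fin M)).powersetCard I, (I : ℝ)⁻¹ * ∑ ξ ∈ s, a ξ)
      = (M : ℝ)⁻¹ * ∑ m, a m := by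
  have hM : 1 ≤ M := le_trans hI hIM
  have hswap : ∑ s ∈ (univ : Finset (Fin M)).powersetCard I, ∑ ξ ∈ s, a ξ
      = ∑ ξ : Fin M, ((M - 1).choose (I - 1) : ℝ) * a ξ := by
    have : ∀ s ∈ (univ : Finset (Fin M)).powersetCard I,
        ∑ ξ ∈ s, a ξ = ∑ ξ : Fin M, if ξ ∈ s then a ξ else 0 := by
      intro s _
      rw [Finset.sum_ite_mem, univ_inter]
    rw [Finset.sum_congr rfl this, Finset.sum_comm]
    apply Finset.sum_congr rfl
    intro ξ _
    rw [Finset.sum_ite, Finset.sum_const_zero, add_zero, Finset.sum_const,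
      count_contain hI ξ, nsmul_eq_mul]
  rw [← Finset.mul_sum, hswap, ← Finset.mul_sum, card_powersetCard, card_univ,
    Fintype.card_fin, ← mul_assoc, ← mul_assoc]
  congr 1
  have hnat : M * (M - 1).choose (I - 1) = M.choose I * I := by
    have := Nat.add_one_mul_choose_eq (M - 1) (I - 1)
    rw [Nat.sub_add_cancel hM, Nat.sub_add_cancel hI] at this
    exact this
  have hMne : (M : ℝ) ≠ 0 := Nat.cast_ne_zero.mpr (by omega)
  have hIne : (I : ℝ) ≠ 0 := Nat.cast_ne_zero.mpr (by omega)
  have hCne : (M.choose I : ℝ) ≠ 0 :=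
    Nat.cast_ne_zero.mpr (Nat.choose_pos hIM).ne'
  have hcast : (M : ℝ) * ((M - 1).choose (I - 1) : ℝ) = (M.choose I : ℝ) * I := by
    exact_mod_cast congrArg (Nat.cast : ℕ → ℝ) hnat
  field_simp
  linarith [hcast]

private lemma jensen_norm_sq {M : ℕ} (I : ℕ) (hI : 1 ≤ I) (s : Finset (Fin M))
    (hcard : s.card = I) (v : Fin M → E) (c : E) :
    ‖(I : ℝ)⁻¹ • (∑ ξ ∈ s, v ξ) - c‖ ^ 2 ≤ (I : ℝ)⁻¹ * ∑ ξ ∈ s, ‖v ξ - c‖ ^ 2 := by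
  have hIne : (I : ℝ) ≠ 0 := Nat.cast_ne_zero.mpr (by omega)
  have hIpos : (0:ℝ) < I := by positivity
  have hvec : (I : ℝ)⁻¹ • (∑ ξ ∈ s, v ξ) - c = (I : ℝ)⁻¹ • (∑ ξ ∈ s, (v ξ - c)) := by
    rw [Finset.sum_sub_distrib, smul_sub, Finset.sum_const, hcard]
    congr 1
    rw [← Nat.cast_smul_eq_nsmul ℝ, smul_smul, inv_mul_cancel₀ hIne, one_smul]
  rw [hvec]
  have h1 : ‖(I : ℝ)⁻¹ • (∑ ξ ∈ s, (v ξ - c))‖ ≤ (I : ℝ)⁻¹ * ∑ ξ ∈ s, ‖v ξ - c‖ := by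
    rw [norm_smul]
    simp only [norm_inv, Real.norm_natCast]
    exact mul_le_mul_of_nonneg_left (norm_sum_le s _) (by positivity)
  have h2 : ‖(I : ℝ)⁻¹ • (∑ ξ ∈ s, (v ξ - c))‖ ^ 2
      ≤ ((I : ℝ)⁻¹ * ∑ ξ ∈ s, ‖v ξ - c‖) ^ 2 :=
    pow_le_pow_left₀ (norm_nonneg _) h1 2
  refine h2.trans ?_
  have h3 : (∑ ξ ∈ s, ‖v ξ - c‖) ^ 2 ≤ (s.card : ℝ) * ∑ ξ ∈ s, ‖v ξ - c‖ ^ 2 :=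
    sq_sum_le_card_mul_sum_sq
  rw [hcard] at h3
  rw [mul_pow]
  calc ((I:ℝ)⁻¹) ^ 2 * (∑ ξ ∈ s, ‖v ξ - c‖) ^ 2
      ≤ ((I:ℝ)⁻¹) ^ 2 * ((I:ℝ) * ∑ ξ ∈ s, ‖v ξ - c‖ ^ 2) :=
        mul_le_mul_of_nonneg_left h3 (by positivity)
    _ = (I : ℝ)⁻¹ * ∑ ξ ∈ s, ‖v ξ - c‖ ^ 2 := by field_simp

private lemma avg_weakly_convex {M : ℕ} (hM : 1 ≤ M) (ν : ℝ)
    (R : Fin M → E → ℝ)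
    (hwc : ∀ m, ConvexOn ℝ Set.univ (fun u => R m u + ν / 2 * ‖u‖ ^ 2))
    (Rbar : E → ℝ) (hRbar : ∀ u, Rbar u = (M : ℝ)⁻¹ * ∑ m, R m u) :
    ConvexOn ℝ Set.univ (fun u => Rbar u + ν / 2 * ‖u‖ ^ 2) := by
  have hMne : (M : ℝ) ≠ 0 := Nat.cast_ne_zero.mpr (by omega)
  have key : ∀ u : E, Rbar u + ν / 2 * ‖u‖ ^ 2
      = (M : ℝ)⁻¹ * ∑ m, (R m u + ν / 2 * ‖u‖ ^ 2) := by
    intro u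
    rw [hRbar, Finset.sum_add_distrib, Finset.sum_const, card_univ, Fintype.card_fin,
      nsmul_eq_mul, mul_add]
    congr 1
    rw [← mul_assoc, inv_mul_cancel₀ hMne, one_mul]
  refine ⟨convex_univ, fun x _ y _ a b ha hb hab => ?_⟩
  simp only [smul_eq_mul, key]
  calc (M : ℝ)⁻¹ * ∑ m, (R m (a • x + b • y) + ν / 2 * ‖a • x + b • y‖ ^ 2)
      ≤ (M : ℝ)⁻¹ * ∑ m, (a * (R m x + ν / 2 * ‖x‖ ^ 2) + b * (R m y + ν / 2 * ‖y‖ ^ 2)) := by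
        apply mul_le_mul_of_nonneg_left _ (by positivity)
        apply Finset.sum_le_sum
        intro m _
        have := (hwc m).2 (Set.mem_univ x) (Set.mem_univ y) ha hb hab
        simpa using this
    _ = a * ((M : ℝ)⁻¹ * ∑ m, (R m x + ν / 2 * ‖x‖ ^ 2))
        + b * ((M : ℝ)⁻¹ * ∑ m, (R m y + ν / 2 * ‖y‖ ^ 2)) := by
        rw [Finset.sum_add_distrib, ← Finset.mul_sum, ← Finset.mul_sum]
        ring

end AuxLemmas

set_option maxHeartbeats 1000000 in
/-- One-step descent bound for `FedProx` on the Moreau envelope (non-smooth,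
weakly convex case): with `G`-Lipschitz, `ν`-weakly convex local objectives,
`0 < η ≤ ρ < 1/(2ν)`, `w^(m)` the exact local proximal points, `w⁺` their average over a
uniformly random size-`I` subset, and `ŵ = prox_{ρR̄}(w)`,
`E[R̄_ρ(w⁺)] ≤ R̄_ρ(w) − (((1/ρ − ν)/ρ)/(1/η + 1/ρ − 2ν))‖ŵ − w‖²
+ (2G²η/ρ)/(1/η + 1/ρ − 2ν)`. -/
theorem fedprox_one_step_descent_nonsmooth
    (p M I : ℕ) (hI : 1 ≤ I) (hIM : I ≤ M)
    (G ν ρ η : ℝ) (hG : 0 ≤ G) (hν : 0 < ν)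
    (hη0 : 0 < η) (hηρ : η ≤ ρ) (hρ : ρ < 1 / (2 * ν))
    (R : Fin M → EuclideanSpace ℝ (Fin p) → ℝ)
    (hlip : ∀ m u u', |R m u - R m u'| ≤ G * ‖u - u'‖)
    (hwc : ∀ m, ConvexOn ℝ Set.univ (fun u => R m u + (ν / 2) * ‖u‖ ^ 2))
    (Rbar : EuclideanSpace ℝ (Fin p) → ℝ)
    (hRbar : ∀ u, Rbar u = (M : ℝ)⁻¹ * ∑ m, R m u)
    (Rρ : EuclideanSpace ℝ (Fin p) → ℝ)
    (hRρ : ∀ u, Rρ u = ⨅ v, Rbar v + ‖v - u‖ ^ 2 / (2 * ρ))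
    (w : EuclideanSpace ℝ (Fin p))
    (wm : Fin M → EuclideanSpace ℝ (Fin p))
    (hwm : ∀ m, IsMinOn (fun u => R m u + ‖u - w‖ ^ 2 / (2 * η)) Set.univ (wm m))
    (hwmuniq : ∀ m u,
      IsMinOn (fun v => R m v + ‖v - w‖ ^ 2 / (2 * η)) Set.univ u → u = wm m)
    (hatw : EuclideanSpace ℝ (Fin p))
    (hhatw : IsMinOn (fun u => Rbar u + ‖u - w‖ ^ 2 / (2 * ρ)) Set.univ hatw) :
    ((((Finset.univ : Finset (Fin M)).powersetCard I).card : ℝ)⁻¹ *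
      ∑ s ∈ (Finset.univ : Finset (Fin M)).powersetCard I,
        Rρ ((I : ℝ)⁻¹ • ∑ ξ ∈ s, wm ξ))
      ≤ Rρ w - (((1 / ρ - ν) / ρ) / (1 / η + 1 / ρ - 2 * ν)) * ‖hatw - w‖ ^ 2
        + (2 * G ^ 2 * η / ρ) / (1 / η + 1 / ρ - 2 * ν) := by
  classical
  have hM : 1 ≤ M := le_trans hI hIM
  have hMne : (M : ℝ) ≠ 0 := Nat.cast_ne_zero.mpr (by omega)
  have hρ0 : 0 < ρ := lt_of_lt_of_le hη0 hηρ
  have hνρ' : 2 * ν < 1 / ρ := by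
    rw [lt_div_iff₀ hρ0]
    rw [lt_div_iff₀ (by positivity : (0:ℝ) < 2 * ν)] at hρ
    linarith
  have hra : 1 / ρ ≤ 1 / η := one_div_le_one_div_of_le hη0 hηρ
  have hαpos : 0 < 1 / η - ν := by linarith
  have hrν : 0 < 1 / ρ - ν := by linarith
  have hβpos : 0 < 1 / η + 1 / ρ - 2 * ν := by linarith
  -- Lipschitz bound for Rbar
  have hlipbar : ∀ u u', Rbar u - Rbar u' ≤ G * ‖u - u'‖ := by
    intro u u'
    rw [hRbar u, hRbar u', ← mul_sub, ← Finset.sum_sub_distrib]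
    have h1 : ∑ m, (R m u - R m u') ≤ ∑ _m : Fin M, G * ‖u - u'‖ :=
      Finset.sum_le_sum fun m _ => le_of_abs_le (hlip m u u')
    calc (M:ℝ)⁻¹ * ∑ m, (R m u - R m u')
        ≤ (M:ℝ)⁻¹ * ∑ _m : Fin M, G * ‖u - u'‖ :=
          mul_le_mul_of_nonneg_left h1 (by positivity)
      _ = G * ‖u - u'‖ := by
          rw [Finset.sum_const, card_univ, Fintype.card_fin, nsmul_eq_mul,
            ← mul_assoc, inv_mul_cancel₀ hMne, one_mul]
  -- bdd below of the Moreau infimand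
  have hbdd : ∀ x : EuclideanSpace ℝ (Fin p),
      BddBelow (Set.range fun v => Rbar v + ‖v - x‖ ^ 2 / (2 * ρ)) := by
    intro x
    refine ⟨Rbar x - G ^ 2 * ρ / 2, ?_⟩
    rintro y ⟨v, rfl⟩
    have h1 : Rbar x - Rbar v ≤ G * ‖x - v‖ := hlipbar x v
    rw [norm_sub_rev] at h1
    have h4 : G * ‖v - x‖ - G ^ 2 * ρ / 2 ≤ ‖v - x‖ ^ 2 / (2 * ρ) := by
      rw [le_div_iff₀ (by positivity : (0:ℝ) < 2 * ρ)]
      nlinarith [sq_nonneg (‖v - x‖ - G * ρ)]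
    simp only
    linarith
  -- value of the envelope at w
  have hRρw : Rρ w = Rbar hatw + ‖hatw - w‖ ^ 2 / (2 * ρ) := by
    rw [hRρ w]
    apply le_antisymm
    · exact ciInf_le (hbdd w) hatw
    · exact le_ciInf fun v => (isMinOn_iff.mp hhatw) v (Set.mem_univ v)
  -- weak convexity of Rbar
  have hwcbar : ConvexOn ℝ Set.univ (fun u => Rbar u + ν / 2 * ‖u‖ ^ 2) :=
    avg_weakly_convex hM ν R hwc Rbar hRbar
  -- strong-convexity growth for Rbar at u = w
  have hgrow_bar := strong_growth Rbar ν ρ hρ0 hwcbar w hatw hhatw w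
  rw [show w - w = (0 : EuclideanSpace ℝ (Fin p)) by abel] at hgrow_bar
  rw [norm_zero] at hgrow_bar
  rw [show ‖w - hatw‖ ^ 2 = ‖hatw - w‖ ^ 2 from by rw [norm_sub_rev]] at hgrow_bar
  -- per-machine growth
  have hpm : ∀ m, (1 / η - ν) / 2 * ‖hatw - wm m‖ ^ 2
      ≤ R m hatw - R m w + ‖hatw - w‖ ^ 2 / (2 * η) + G ^ 2 * η / 2 := by
    intro m
    have hg := strong_growth (R m) ν η hη0 (hwc m) w (wm m) (hwm m) hatw
    have hl : R m w - R m (wm m) ≤ G * ‖wm m - w‖ := by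
      have h := le_of_abs_le (hlip m w (wm m))
      rw [norm_sub_rev] at h
      exact h
    have hq : G * ‖wm m - w‖ - G ^ 2 * η / 2 ≤ ‖wm m - w‖ ^ 2 / (2 * η) := by
      rw [le_div_iff₀ (by positivity : (0:ℝ) < 2 * η)]
      nlinarith [sq_nonneg (‖wm m - w‖ - G * η)]
    linarith
  -- averaged growth
  set A : ℝ := (M : ℝ)⁻¹ * ∑ m, ‖hatw - wm m‖ ^ 2 with hAdef
  have hAnn : 0 ≤ A := by positivity
  have hh2 : (1 / η - ν) / 2 * A
      ≤ Rbar hatw - Rbar w + ‖hatw - w‖ ^ 2 / (2 * η) + G ^ 2 * η / 2 := by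
    have hsum := Finset.sum_le_sum (fun m (_ : m ∈ (univ : Finset (Fin M))) => hpm m)
    have h := mul_le_mul_of_nonneg_left hsum (show (0:ℝ) ≤ (M:ℝ)⁻¹ by positivity)
    have hLtot : (M:ℝ)⁻¹ * ∑ m, ((1 / η - ν) / 2 * ‖hatw - wm m‖ ^ 2)
        = (1 / η - ν) / 2 * A := by
      rw [← Finset.mul_sum, hAdef]; ring
    have hRtot : (M:ℝ)⁻¹ * ∑ m, (R m hatw - R m w + ‖hatw - w‖ ^ 2 / (2 * η)
          + G ^ 2 * η / 2)
        = Rbar hatw - Rbar w + ‖hatw - w‖ ^ 2 / (2 * η) + G ^ 2 * η / 2 := by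
      rw [Finset.sum_add_distrib, Finset.sum_add_distrib, Finset.sum_sub_distrib,
        Finset.sum_const, Finset.sum_const, card_univ, Fintype.card_fin,
        nsmul_eq_mul, nsmul_eq_mul, hRbar, hRbar]
      field_simp
    rw [hLtot, hRtot] at h
    exact h
  -- bound the averaged envelope values
  have hCpos : (0:ℝ) < (((univ : Finset (Fin M)).powersetCard I).card : ℝ) := by
    rw [card_powersetCard, card_univ, Fintype.card_fin]
    exact_mod_cast Nat.choose_pos hIM
  have hLHS : ((((univ : Finset (Fin M)).powersetCard I).card : ℝ)⁻¹ *
      ∑ s ∈ (univ : Finset (Fin M)).powersetCard I, Rρ ((I : ℝ)⁻¹ • ∑ ξ ∈ s, wm ξ))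
      ≤ Rbar hatw + A / (2 * ρ) := by
    have hper : ∀ s ∈ (univ : Finset (Fin M)).powersetCard I,
        Rρ ((I : ℝ)⁻¹ • ∑ ξ ∈ s, wm ξ)
          ≤ Rbar hatw + ((I : ℝ)⁻¹ * ∑ ξ ∈ s, ‖hatw - wm ξ‖ ^ 2) / (2 * ρ) := by
      intro s hs
      rw [mem_powersetCard] at hs
      have h1 : Rρ ((I : ℝ)⁻¹ • ∑ ξ ∈ s, wm ξ)
          ≤ Rbar hatw + ‖hatw - ((I : ℝ)⁻¹ • ∑ ξ ∈ s, wm ξ)‖ ^ 2 / (2 * ρ) := by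
        rw [hRρ]
        exact ciInf_le (hbdd _) hatw
      have h2 : ‖hatw - ((I : ℝ)⁻¹ • ∑ ξ ∈ s, wm ξ)‖ ^ 2
          = ‖(I : ℝ)⁻¹ • (∑ ξ ∈ s, wm ξ) - hatw‖ ^ 2 := by rw [norm_sub_rev]
      have h3 := jensen_norm_sq I hI s hs.2 wm hatw
      have h4 : (I : ℝ)⁻¹ * ∑ ξ ∈ s, ‖wm ξ - hatw‖ ^ 2
          = (I : ℝ)⁻¹ * ∑ ξ ∈ s, ‖hatw - wm ξ‖ ^ 2 := by
        congr 1
        exact Finset.sum_congr rfl fun ξ _ => by rw [norm_sub_rev]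
      rw [h4] at h3
      rw [h2] at h1
      refine h1.trans ?_
      have h6 : ‖(I : ℝ)⁻¹ • (∑ ξ ∈ s, wm ξ) - hatw‖ ^ 2 / (2 * ρ)
          ≤ ((I : ℝ)⁻¹ * ∑ ξ ∈ s, ‖hatw - wm ξ‖ ^ 2) / (2 * ρ) := by
        gcongr
      linarith [h6]
    calc ((((univ : Finset (Fin M)).powersetCard I).card : ℝ)⁻¹ *
        ∑ s ∈ (univ : Finset (Fin M)).powersetCard I, Rρ ((I : ℝ)⁻¹ • ∑ ξ ∈ s, wm ξ))
        ≤ ((((univ : Finset (Fin M)).powersetCard I).card : ℝ)⁻¹ *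
          ∑ s ∈ (univ : Finset (Fin M)).powersetCard I,
            (Rbar hatw + ((I : ℝ)⁻¹ * ∑ ξ ∈ s, ‖hatw - wm ξ‖ ^ 2) / (2 * ρ))) :=
          mul_le_mul_of_nonneg_left (Finset.sum_le_sum hper) (inv_nonneg.mpr hCpos.le)
      _ = Rbar hatw + A / (2 * ρ) := by
          rw [Finset.sum_add_distrib, Finset.sum_const, nsmul_eq_mul, mul_add,
            ← mul_assoc, inv_mul_cancel₀ hCpos.ne', one_mul]
          congr 1
          rw [← Finset.sum_div, ← mul_div_assoc,
            avg_subset_sum hI hIM (fun m => ‖hatw - wm m‖ ^ 2), ← hAdef]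
  -- final algebra
  refine hLHS.trans ?_
  rw [hRρw]
  have h5 : (1 / η - ν) * A
      ≤ ‖hatw - w‖ ^ 2 * (1 / η) - ‖hatw - w‖ ^ 2 * (1 / ρ)
        - (1 / ρ - ν) * ‖hatw - w‖ ^ 2 + G ^ 2 * η := by
    have e1 : ‖hatw - w‖ ^ 2 / (2 * η) = ‖hatw - w‖ ^ 2 * (1 / η) / 2 := by ring
    have e2 : ‖hatw - w‖ ^ 2 / (2 * ρ) = ‖hatw - w‖ ^ 2 * (1 / ρ) / 2 := by ring
    rw [e1] at hh2
    rw [e2] at hgrow_bar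
    rw [show (0:ℝ) ^ 2 / (2 * ρ) = 0 from by ring, add_zero] at hgrow_bar
    linarith
  set D : ℝ := ‖hatw - w‖ ^ 2 with hDdef
  have hDnn : 0 ≤ D := by positivity
  have hfinal : A / (2 * ρ) ≤ D / (2 * ρ)
      - (((1 / ρ - ν) / ρ) / (1 / η + 1 / ρ - 2 * ν)) * D
      + (2 * G ^ 2 * η / ρ) / (1 / η + 1 / ρ - 2 * ν) := by
    have hkey : ((1 / ρ - ν) / ρ * D - 2 * G ^ 2 * η / ρ) / (1 / η + 1 / ρ - 2 * ν)
        ≤ (D - A) / (2 * ρ) := by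
      rw [div_le_div_iff₀ hβpos (by positivity : (0:ℝ) < 2 * ρ)]
      have hL : ((1 / ρ - ν) / ρ * D - 2 * G ^ 2 * η / ρ) * (2 * ρ)
          = 2 * (1 / ρ - ν) * D - 4 * G ^ 2 * η := by
        field_simp
        ring
      rw [hL]
      have hS : 0 ≤ D * (1 / η) - D * (1 / ρ) - (1 / ρ - ν) * D + G ^ 2 * η
          - (1 / η - ν) * A := by linarith
      have h3a : 0 ≤ 3 * (1 / η) - 1 / ρ - 2 * ν := by linarith
      nlinarith [mul_nonneg hβpos.le hS, mul_nonneg hDnn (sq_nonneg (1 / ρ - ν)),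
        mul_nonneg (mul_nonneg (sq_nonneg G) hη0.le) h3a, hαpos, hβpos]
    have hsplit : (((1 / ρ - ν) / ρ) / (1 / η + 1 / ρ - 2 * ν)) * D
        - (2 * G ^ 2 * η / ρ) / (1 / η + 1 / ρ - 2 * ν)
        = ((1 / ρ - ν) / ρ * D - 2 * G ^ 2 * η / ρ) / (1 / η + 1 / ρ - 2 * ν) := by
      ring
    have hDA : (D - A) / (2 * ρ) = D / (2 * ρ) - A / (2 * ρ) := by ring
    linarith [hkey, hsplit.ge, hsplit.le, hDA.le, hDA.ge]
  linarith [hfinal]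
end
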